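/- arXiv:2402.13248 — 6 statements merged into one kernel-verified Lean document; each statement's English description precedes it below -/
import Mathlib

section
/- Let h(t) be a polynomial of degree n and suppose gamma(u) is a polynomial such that h(t) = (1+t)^n * gamma(t/(1+t)^2) as rational functions. Then for every m >= 1, the coefficient gamma_m of u^m in gamma satisfies: m * gamma_m equals the coefficient of u^{m-1} in J'(u) * (1+u)^{2m}, where J(u) = h(u)/(1+u)^n is viewed as a formal power series (rational function expansion at u = 0). -/
open PowerSeries

section Aux

noncomputable abbrev AA : PowerSeries ℚ := 1 + PowerSeries.X

lemma constCoeff_AA_pow (b : ℕ) : constantCoeff (R := ℚ) (AA ^ b) = 1 := by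
  simp [AA]

lemma AA_pow_mul_inv (b : ℕ) : AA ^ b * (AA ^ b)⁻¹ = 1 :=
  PowerSeries.mul_inv_cancel _ (by rw [constCoeff_AA_pow]; exact one_ne_zero)

lemma AA_pow_mul_inv_of_le {a b : ℕ} (hba : b ≤ a) :
    AA ^ a * (AA ^ b)⁻¹ = AA ^ (a - b) := by
  have : AA ^ a = AA ^ (a - b) * AA ^ b := by
    rw [← pow_add, Nat.sub_add_cancel hba]
  rw [this, mul_assoc, AA_pow_mul_inv, mul_one]

lemma AA_pow_mul_inv_of_ge {a b : ℕ} (hab : a ≤ b) :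
    AA ^ a * (AA ^ b)⁻¹ = (AA ^ (b - a))⁻¹ := by
  have : AA ^ b = AA ^ (b - a) * AA ^ a := by
    rw [← pow_add, Nat.sub_add_cancel hab]
  rw [this, PowerSeries.mul_inv_rev, ← mul_assoc, AA_pow_mul_inv, one_mul]

lemma AA_inv_mul_inv (a b : ℕ) :
    (AA ^ a)⁻¹ * (AA ^ b)⁻¹ = (AA ^ (a + b))⁻¹ := by
  rw [pow_add, PowerSeries.mul_inv_rev, mul_comm]

lemma AA_inv_pow (a s : ℕ) : ((AA ^ a)⁻¹) ^ s = (AA ^ (a * s))⁻¹ := by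
  induction s with
  | zero => simp [PowerSeries.inv_eq_iff_mul_eq_one, constCoeff_AA_pow]
  | succ s ih => rw [pow_succ, ih, AA_inv_mul_inv, Nat.mul_succ]

lemma coeff_AA_pow (j i : ℕ) : PowerSeries.coeff (R := ℚ) i (AA ^ j) = (j.choose i : ℚ) := by
  have : (AA ^ j : PowerSeries ℚ) = (((1 + Polynomial.X : Polynomial ℚ) ^ j : Polynomial ℚ) : PowerSeries ℚ) := by
    simp [AA]
  rw [this, Polynomial.coeff_coe, Polynomial.coeff_one_add_X_pow]

noncomputable abbrev ww : PowerSeries ℚ := PowerSeries.X * ((AA ^ 2)⁻¹ : PowerSeries ℚ)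

lemma ww_mul_AA_sq : ww * AA ^ 2 = PowerSeries.X := by
  rw [mul_assoc, mul_comm ((AA ^ 2)⁻¹), AA_pow_mul_inv, mul_one]

lemma deriv_AA_sq : d⁄dX ℚ (AA ^ 2) = 2 * AA := by
  have hA : d⁄dX ℚ AA = 1 := by
    rw [AA, map_add, derivative_X]
    simp [Derivation.map_one_eq_zero]
  rw [Derivation.leibniz_pow, hA]
  simp [smul_eq_mul]
  ring

lemma deriv_ww_mul : (d⁄dX ℚ ww) * AA ^ 3 = 1 - PowerSeries.X := by
  have h1 : d⁄dX ℚ (ww * AA ^ 2) = 1 := by rw [ww_mul_AA_sq, derivative_X]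
  rw [Derivation.leibniz, smul_eq_mul, smul_eq_mul, deriv_AA_sq] at h1
  have h2 : (ww * (2 * AA) + AA ^ 2 * d⁄dX ℚ ww) * AA = AA := by rw [h1, one_mul]
  have h3 : ww * (2 * AA) * AA = 2 * PowerSeries.X := by
    have : ww * (2 * AA) * AA = 2 * (ww * AA ^ 2) := by ring
    rw [this, ww_mul_AA_sq]
  have h4 : AA ^ 2 * d⁄dX ℚ ww * AA = (d⁄dX ℚ ww) * AA ^ 3 := by ring
  rw [add_mul, h3, h4] at h2
  have := sub_eq_of_eq_add' h2.symm
  rw [← this, AA]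
  ring

lemma deriv_ww : d⁄dX ℚ ww = (1 - PowerSeries.X) * (AA ^ 3)⁻¹ := by
  have := congrArg (· * (AA ^ 3)⁻¹) deriv_ww_mul
  simpa [mul_assoc, AA_pow_mul_inv] using this

/-- The central computation. -/
lemma coeff_deriv_pow_mul (m k : ℕ) (hm : 1 ≤ m) :
    PowerSeries.coeff (R := ℚ) (m - 1) ((d⁄dX ℚ (ww ^ k)) * AA ^ (2 * m)) =
      if k = m then (m : ℚ) else 0 := by
  rcases Nat.eq_zero_or_pos k with hk | hk
  · subst hk
    rw [pow_zero, Derivation.map_one_eq_zero, zero_mul, map_zero]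
    rw [if_neg (by omega)]
  · -- k ≥ 1
    have hE : (ww ^ (k - 1)) * (d⁄dX ℚ ww) * AA ^ (2 * m) =
        PowerSeries.X ^ (k - 1) * ((1 - PowerSeries.X) * (AA ^ (2 * m) * (AA ^ (2 * k + 1))⁻¹)) := by
      rw [deriv_ww, ww, mul_pow]
      have h21 : 2 * (k - 1) + 3 = 2 * k + 1 := by omega
      calc PowerSeries.X ^ (k - 1) * ((AA ^ 2)⁻¹) ^ (k - 1) *
            ((1 - PowerSeries.X) * (AA ^ 3)⁻¹) * AA ^ (2 * m)
          = PowerSeries.X ^ (k - 1) * ((1 - PowerSeries.X) *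
              (AA ^ (2 * m) * (((AA ^ 2)⁻¹) ^ (k - 1) * (AA ^ 3)⁻¹))) := by ring
        _ = _ := by rw [AA_inv_pow, AA_inv_mul_inv, h21]
    have hc : PowerSeries.coeff (R := ℚ) (m - 1)
        (PowerSeries.X ^ (k - 1) * ((1 - PowerSeries.X) * (AA ^ (2 * m) * (AA ^ (2 * k + 1))⁻¹)))
        = if k = m then 1 else 0 := by
      rcases lt_trichotomy k m with hkm | hkm | hkm
      · -- k < m : coefficient is C(2j-1, j) - C(2j-1, j-1) = 0 with j = m - k
        rw [if_neg (by omega)]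
        set j := m - k with hj
        have hj1 : 1 ≤ j := by omega
        rw [AA_pow_mul_inv_of_le (by omega)]
        have h2m : 2 * m - (2 * k + 1) = 2 * j - 1 := by omega
        rw [h2m]
        have hidx : m - 1 = j + (k - 1) := by omega
        rw [hidx, PowerSeries.coeff_X_pow_mul]
        have hexp : (1 - PowerSeries.X) * AA ^ (2 * j - 1) =
            AA ^ (2 * j - 1) - PowerSeries.X ^ 1 * AA ^ (2 * j - 1) := by ring
        rw [hexp, map_sub]
        have hidx2 : j = (j - 1) + 1 := by omega
        rw [hidx2, PowerSeries.coeff_X_pow_mul, ← hidx2, coeff_AA_pow, coeff_AA_pow]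
        have hch : (2 * j - 1).choose j = (2 * j - 1).choose (j - 1) := by
          have := Nat.choose_symm (n := 2 * j - 1) (k := j) (by omega)
          rw [show 2 * j - 1 - j = j - 1 by omega] at this
          exact this.symm
        rw [hch, sub_self]
      · -- k = m : coefficient is 1
        subst hkm
        rw [if_pos rfl, AA_pow_mul_inv_of_ge (by omega)]
        have h2m : 2 * k + 1 - 2 * k = 1 := by omega
        rw [h2m]
        rw [PowerSeries.coeff_X_pow_mul', if_pos le_rfl, Nat.sub_self,
          PowerSeries.coeff_zero_eq_constantCoeff,
          map_mul, map_sub, map_one, constantCoeff_X, PowerSeries.constantCoeff_inv,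
          constCoeff_AA_pow]
        norm_num
      · -- k > m : the X^(k-1) factor kills the coefficient
        rw [if_neg (by omega), PowerSeries.coeff_X_pow_mul', if_neg (by omega)]
    rw [Derivation.leibniz_pow, smul_eq_mul, smul_mul_assoc, map_nsmul, hE, hc]
    rcases eq_or_ne k m with rfl | hkm
    · rw [if_pos rfl, if_pos rfl, nsmul_eq_mul, mul_one]
    · rw [if_neg hkm, if_neg hkm, smul_zero]

end Aux

/-- If `h(t) = (1+t)^n γ(t/(1+t)^2)`, then for `m ≥ 1`, `m·γₘ` is the coefficient of
`u^(m-1)` in `J'(u)(1+u)^(2m)`, where `J(u) = h(u)/(1+u)^n`. -/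
theorem gamma_coeff_eq_coeff_derivative
    (n : ℕ) (h γ : Polynomial ℚ) (hn : h.natDegree = n)
    (hfe : (h : PowerSeries ℚ) =
      (1 + PowerSeries.X) ^ n *
        Polynomial.aeval (PowerSeries.X * (((1 + PowerSeries.X) ^ 2)⁻¹ : PowerSeries ℚ)) γ)
    (m : ℕ) (hm : 1 ≤ m) :
    (m : ℚ) * γ.coeff m =
      PowerSeries.coeff (R := ℚ) (m - 1)
        (PowerSeries.derivativeFun
            ((h : PowerSeries ℚ) * (((1 + PowerSeries.X) ^ n)⁻¹ : PowerSeries ℚ)) *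
          (1 + PowerSeries.X) ^ (2 * m)) := by
  have hJ : (h : PowerSeries ℚ) * (((1 + PowerSeries.X) ^ n)⁻¹ : PowerSeries ℚ) =
      Polynomial.aeval ww γ := by
    rw [hfe, mul_right_comm]
    have := AA_pow_mul_inv n
    rw [AA] at this
    rw [this, one_mul]
  have hD : PowerSeries.derivativeFun
      ((h : PowerSeries ℚ) * (((1 + PowerSeries.X) ^ n)⁻¹ : PowerSeries ℚ)) =
      d⁄dX ℚ (Polynomial.aeval ww γ) := by rw [← hJ]; rfl
  rw [hD, Polynomial.aeval_eq_sum_range (x := ww), map_sum, Finset.sum_mul, map_sum]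
  have hterm : ∀ k ∈ Finset.range (γ.natDegree + 1),
      PowerSeries.coeff (R := ℚ) (m - 1) ((d⁄dX ℚ (γ.coeff k • ww ^ k)) * (1 + PowerSeries.X) ^ (2 * m))
        = if k = m then γ.coeff k * m else 0 := by
    intro k _
    rw [Derivation.map_smul, smul_mul_assoc, map_smul, smul_eq_mul]
    have := coeff_deriv_pow_mul m k hm
    rw [AA] at this
    rw [this, mul_ite, mul_zero]
  rw [Finset.sum_congr rfl hterm, Finset.sum_ite_eq' (Finset.range (γ.natDegree + 1)) m]
  by_cases hmd : m ∈ Finset.range (γ.natDegree + 1)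
  · rw [if_pos hmd, mul_comm]
  · rw [if_neg hmd]
    have : γ.coeff m = 0 := by
      apply Polynomial.coeff_eq_zero_of_natDegree_lt
      simpa [Finset.mem_range, Nat.lt_succ_iff] using hmd
    rw [this, mul_zero]
end

section
/- Let Delta be a (d-1)-dimensional simplicial complex with h-polynomial h(w) (of the complex of dimension d-1) and for each vertex p let h_{lk(p)}(w) be the h-polynomial of the link of p. Then (1-w) * h'(w) = sum_{p in V(Delta)} h_{lk(p)}(w) - d * h(w). -/
open Finset Polynomial

variable {V : Type*} [Fintype V] [DecidableEq V]

/-- The `h`-polynomial of a set system `Δ`, with respect to the dimension parameter `d`: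
`h(w) = ∑_{F ∈ Δ} w^|F| (1-w)^{d-|F|} = ∑_i f_{i-1} wⁱ (1-w)^{d-i}`. -/
noncomputable def hPoly (d : ℕ) (Δ : Finset (Finset V)) : Polynomial ℚ :=
  ∑ F ∈ Δ, Polynomial.X ^ F.card * (1 - Polynomial.X) ^ (d - F.card)

/-- The link of a vertex `p` in `Δ`: all `G` with `p ∉ G` and `G ∪ {p} ∈ Δ`. -/
def link (Δ : Finset (Finset V)) (p : V) : Finset (Finset V) :=
  (Δ.filter (fun F => p ∈ F)).image (fun F => F.erase p)

/-- The vertex set of `Δ`. -/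
def vertexSet (Δ : Finset (Finset V)) : Finset V :=
  Finset.univ.filter (fun p => {p} ∈ Δ)

lemma key_term (c e : ℕ) :
    (1 - Polynomial.X) * Polynomial.derivative
        ((Polynomial.X : Polynomial ℚ) ^ c * (1 - Polynomial.X) ^ e) =
      (c : Polynomial ℚ) * (Polynomial.X ^ (c - 1) * (1 - Polynomial.X) ^ e) -
        ((c + e : ℕ) : Polynomial ℚ) * (Polynomial.X ^ c * (1 - Polynomial.X) ^ e) := by
  rcases c with _ | c <;> rcases e with _ | e <;>
    simp [derivative_pow, Nat.succ_sub_one] <;> push_cast <;> ring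

lemma hPoly_link (d : ℕ) (Δ : Finset (Finset V)) (p : V) :
    hPoly (d - 1) (link Δ p) =
      ∑ F ∈ Δ.filter (fun F => p ∈ F),
        (Polynomial.X : Polynomial ℚ) ^ (F.card - 1) * (1 - Polynomial.X) ^ (d - F.card) := by
  unfold hPoly link
  rw [Finset.sum_image]
  · refine Finset.sum_congr rfl fun F hF => ?_
    rw [Finset.mem_filter] at hF
    rw [Finset.card_erase_of_mem hF.2]
    congr 1
    have : 1 ≤ F.card := Finset.card_pos.2 ⟨p, hF.2⟩
    congr 1
    omega
  · intro F hF G hG h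
    rw [Finset.mem_coe, Finset.mem_filter] at hF hG
    have := congrArg (insert p) h
    rwa [Finset.insert_erase hF.2, Finset.insert_erase hG.2] at this

/-- For a `(d-1)`-dimensional simplicial complex `Δ`,
`(1-w) h'(w) = ∑_{p ∈ V(Δ)} h_{lk(p)}(w) - d h(w)`. -/
theorem one_sub_mul_derivative_hPoly
    (d : ℕ) (Δ : Finset (Finset V))
    (hne : Δ.Nonempty)
    (hdown : ∀ F ∈ Δ, ∀ G ⊆ F, G ∈ Δ)
    (hdim_le : ∀ F ∈ Δ, F.card ≤ d)
    (hdim : ∃ F ∈ Δ, F.card = d) :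
    (1 - Polynomial.X) * Polynomial.derivative (hPoly d Δ) =
      (∑ p ∈ vertexSet Δ, hPoly (d - 1) (link Δ p)) - (d : Polynomial ℚ) * hPoly d Δ := by
  have hsum : (∑ p ∈ vertexSet Δ, hPoly (d - 1) (link Δ p)) =
      ∑ F ∈ Δ, (F.card : Polynomial ℚ) *
        (Polynomial.X ^ (F.card - 1) * (1 - Polynomial.X) ^ (d - F.card)) := by
    simp only [hPoly_link]
    rw [Finset.sum_comm' (s := vertexSet Δ) (t := fun p => Δ.filter (fun F => p ∈ F))
      (t' := Δ) (s' := fun F => (vertexSet Δ).filter (fun p => p ∈ F))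
      (h := by
        intro p F
        simp only [Finset.mem_filter]
        tauto)]
    refine Finset.sum_congr rfl fun F hF => ?_
    rw [Finset.sum_const]
    have hfil : (vertexSet Δ).filter (fun p => p ∈ F) = F := by
      ext q
      simp only [Finset.mem_filter, vertexSet, Finset.mem_univ, true_and]
      constructor
      · tauto
      · intro hq
        exact ⟨hdown F hF {q} (Finset.singleton_subset_iff.2 hq), hq⟩
    rw [hfil, nsmul_eq_mul]
  rw [hsum]
  unfold hPoly
  rw [Polynomial.derivative_sum, Finset.mul_sum, Finset.mul_sum, ← Finset.sum_sub_distrib]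
  refine Finset.sum_congr rfl fun F hF => ?_
  have hc : F.card ≤ d := hdim_le F hF
  have := key_term F.card (d - F.card)
  rw [Nat.add_sub_cancel' hc] at this
  rw [this]
end

section
/- Let A(t) = a_0 + a_1 t + ... + a_d t^d, R(t) = t^d A(1/t), and B(t) = R(t+1). Define gamma_r(B) via r*gamma_r = [u^{r-1}] J'(u)(1+u)^{2r} with J(u) = B(u)/(1+u)^d. Then r * gamma_r(B) = - sum_{k=0}^{d} k * binom(2r - k - 1, r - 1) * a_k, where binom(2r-k-1, r-1) is the generalized binomial coefficient (possibly negative when 2r - k - 1 < 0). -/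
open PowerSeries Finset

/-- Generalized binomial coefficient `binom(m, j) = m(m-1)⋯(m-j+1)/j!` for integer `m`. -/
noncomputable def genChoose (m : ℤ) (j : ℕ) : ℝ :=
  (∏ i ∈ Finset.range j, ((m : ℝ) - i)) / (Nat.factorial j : ℝ)

noncomputable def Uu : (PowerSeries ℝ)ˣ :=
  ⟨1 + X, (1 + X)⁻¹,
    PowerSeries.mul_inv_cancel _ (by simp),
    PowerSeries.inv_mul_cancel _ (by simp)⟩

lemma Uu_val : (Uu : PowerSeries ℝ) = 1 + X := rfl

lemma constU (z : ℤ) : constantCoeff (R := ℝ) ((Uu ^ z : (PowerSeries ℝ)ˣ) : PowerSeries ℝ) = 1 := by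
  have h : (Units.map (constantCoeff (R := ℝ)).toMonoidHom) (Uu ^ z)
      = ((Units.map (constantCoeff (R := ℝ)).toMonoidHom) Uu) ^ z := map_zpow _ _ _
  have h2 : (Units.map (constantCoeff (R := ℝ)).toMonoidHom) Uu = 1 := by
    ext; simp [Uu_val]
  rw [h2, one_zpow] at h
  have := congrArg Units.val h
  rw [Units.coe_map] at this
  simpa using this

lemma genChoose_zero (z : ℤ) : genChoose z 0 = 1 := by simp [genChoose]

lemma genChoose_pascal (z : ℤ) (n : ℕ) :
    genChoose (z + 1) (n + 1) = genChoose z (n + 1) + genChoose z n := by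
  unfold genChoose
  have h1 : ∏ i ∈ Finset.range (n + 1), (((z + 1 : ℤ) : ℝ) - i)
      = (∏ i ∈ Finset.range n, ((z : ℝ) - i)) * ((z : ℝ) + 1) := by
    rw [Finset.prod_range_succ']
    push_cast
    congr 1
    · exact Finset.prod_congr rfl (by intro i _; push_cast; ring)
    · ring
  have h2 : ∏ i ∈ Finset.range (n + 1), ((z : ℝ) - i)
      = (∏ i ∈ Finset.range n, ((z : ℝ) - i)) * ((z : ℝ) - n) := by
    rw [Finset.prod_range_succ]
  rw [h1, h2]
  have hf : ((n + 1).factorial : ℝ) = (n + 1) * n.factorial := by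
    push_cast [Nat.factorial_succ]; ring
  rw [hf]
  have hn : (n.factorial : ℝ) ≠ 0 := by positivity
  field_simp
  ring

lemma coeff_mul_U (f : PowerSeries ℝ) (n : ℕ) :
    coeff (n + 1) (f * (Uu : PowerSeries ℝ)) = coeff (n + 1) f + coeff n f := by
  rw [Uu_val, mul_add, mul_one, map_add, coeff_succ_mul_X]

lemma coeff_U (z : ℤ) (n : ℕ) :
    coeff n ((Uu ^ z : (PowerSeries ℝ)ˣ) : PowerSeries ℝ) = genChoose z n := by
  induction z using Int.induction_on generalizing n with
  | zero =>
    cases n with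
    | zero =>
      have := constU 0
      rw [genChoose_zero, coeff_zero_eq_constantCoeff]
      exact this
    | succ m => simp [genChoose, Finset.prod_range_succ']
  | succ k ih =>
    cases n with
    | zero =>
      have := constU ((k : ℤ) + 1)
      rw [genChoose_zero, coeff_zero_eq_constantCoeff]
      exact this
    | succ m =>
      have hval : ((Uu ^ ((k : ℤ) + 1) : (PowerSeries ℝ)ˣ) : PowerSeries ℝ)
          = ((Uu ^ (k : ℤ) : (PowerSeries ℝ)ˣ) : PowerSeries ℝ) * (Uu : PowerSeries ℝ) := by
        rw [← Units.val_mul, zpow_add_one]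
      rw [hval, coeff_mul_U, ih, ih, genChoose_pascal]
  | pred k ih =>
    induction n with
    | zero =>
      have := constU (-(k : ℤ) - 1)
      rw [genChoose_zero, coeff_zero_eq_constantCoeff]
      exact this
    | succ m ihm =>
      have hval : ((Uu ^ (-(k : ℤ)) : (PowerSeries ℝ)ˣ) : PowerSeries ℝ)
          = ((Uu ^ (-(k : ℤ) - 1) : (PowerSeries ℝ)ˣ) : PowerSeries ℝ) * (Uu : PowerSeries ℝ) := by
        rw [← Units.val_mul, ← zpow_add_one]
        norm_num
      have h := coeff_mul_U ((Uu ^ (-(k : ℤ) - 1) : (PowerSeries ℝ)ˣ) : PowerSeries ℝ) m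
      rw [← hval, ih] at h
      have hp := genChoose_pascal (-(k : ℤ) - 1) m
      have he : (-(k : ℤ) - 1 + 1) = -(k : ℤ) := by ring
      rw [he] at hp
      rw [ihm] at h
      linarith

lemma coeff_derivativeFun (f : PowerSeries ℝ) (n : ℕ) :
    coeff n f.derivativeFun = coeff (n + 1) f * (n + 1) :=
  coeff_derivative f n

lemma derivU : derivativeFun (Uu : PowerSeries ℝ) = 1 := by
  ext n
  cases n with
  | zero => simp [Uu_val, coeff_derivativeFun]
  | succ m => simp [Uu_val, coeff_derivativeFun, coeff_X, coeff_one]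

lemma Uval_mul (z w : ℤ) :
    ((Uu ^ z : (PowerSeries ℝ)ˣ) : PowerSeries ℝ) * ((Uu ^ w : (PowerSeries ℝ)ˣ) : PowerSeries ℝ)
      = ((Uu ^ (z + w) : (PowerSeries ℝ)ˣ) : PowerSeries ℝ) := by
  rw [← Units.val_mul, ← zpow_add]

lemma U_mul_Uz (z : ℤ) :
    (Uu : PowerSeries ℝ) * ((Uu ^ z : (PowerSeries ℝ)ˣ) : PowerSeries ℝ)
      = ((Uu ^ (z + 1) : (PowerSeries ℝ)ˣ) : PowerSeries ℝ) := by
  conv_lhs => rw [show (Uu : PowerSeries ℝ) = ((Uu ^ (1 : ℤ) : (PowerSeries ℝ)ˣ) : PowerSeries ℝ) by simp]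
  rw [Uval_mul, add_comm]

lemma deriv_U (z : ℤ) :
    derivativeFun ((Uu ^ z : (PowerSeries ℝ)ˣ) : PowerSeries ℝ)
      = PowerSeries.C (z : ℝ) * ((Uu ^ (z - 1) : (PowerSeries ℝ)ˣ) : PowerSeries ℝ) := by
  induction z using Int.induction_on with
  | zero => simp [derivativeFun_one]
  | succ k ih =>
    have hval : ((Uu ^ ((k : ℤ) + 1) : (PowerSeries ℝ)ˣ) : PowerSeries ℝ)
        = ((Uu ^ (k : ℤ) : (PowerSeries ℝ)ˣ) : PowerSeries ℝ) * (Uu : PowerSeries ℝ) := by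
      rw [← Units.val_mul, zpow_add_one]
    rw [hval, derivativeFun_mul, derivU, ih]
    simp only [smul_eq_mul, mul_one]
    have e1 : (k : ℤ) - 1 + 1 = (k : ℤ) := by ring
    have e2 : (k : ℤ) + 1 - 1 = (k : ℤ) := by ring
    have hm : (Uu : PowerSeries ℝ) * ((Uu ^ ((k : ℤ) - 1) : (PowerSeries ℝ)ˣ) : PowerSeries ℝ)
        = ((Uu ^ (k : ℤ) : (PowerSeries ℝ)ˣ) : PowerSeries ℝ) := by
      rw [U_mul_Uz, e1]
    rw [e2]
    have hC : PowerSeries.C (((k : ℤ) + 1 : ℤ) : ℝ)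
        = PowerSeries.C ((k : ℤ) : ℝ) + 1 := by
      push_cast
      rw [map_add, map_one]
    rw [hC]
    linear_combination (PowerSeries.C ((k : ℤ) : ℝ)) * hm
  | pred k ih =>
    have hval : ((Uu ^ (-(k : ℤ)) : (PowerSeries ℝ)ˣ) : PowerSeries ℝ)
        = ((Uu ^ (-(k : ℤ) - 1) : (PowerSeries ℝ)ˣ) : PowerSeries ℝ) * (Uu : PowerSeries ℝ) := by
      rw [← Units.val_mul, ← zpow_add_one]; norm_num
    have h := congrArg derivativeFun hval
    rw [derivativeFun_mul, derivU, ih] at h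
    simp only [smul_eq_mul, mul_one] at h
    have h4 : (Uu : PowerSeries ℝ)
        * derivativeFun ((Uu ^ (-(k : ℤ) - 1) : (PowerSeries ℝ)ˣ) : PowerSeries ℝ)
        = PowerSeries.C ((-(k : ℤ) - 1 : ℤ) : ℝ)
          * ((Uu ^ (-(k : ℤ) - 1) : (PowerSeries ℝ)ˣ) : PowerSeries ℝ) := by
      have hC : PowerSeries.C ((-(k : ℤ) - 1 : ℤ) : ℝ)
          = PowerSeries.C ((-(k : ℤ) : ℤ) : ℝ) - 1 := by
        push_cast
        rw [map_sub, map_one]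
      rw [hC]
      linear_combination -h
    have h5 := congrArg
      (fun x => ((Uu ^ (-1 : ℤ) : (PowerSeries ℝ)ˣ) : PowerSeries ℝ) * x) h4
    rw [← mul_assoc] at h5
    have hU1 : ((Uu ^ (-1 : ℤ) : (PowerSeries ℝ)ˣ) : PowerSeries ℝ) * (Uu : PowerSeries ℝ) = 1 := by
      rw [mul_comm, U_mul_Uz]; norm_num
    rw [hU1, one_mul, mul_left_comm, Uval_mul] at h5
    rw [h5]
    congr 1
    have e3 : (-1 : ℤ) + (-(k : ℤ) - 1) = -(k : ℤ) - 1 - 1 := by ring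
    rw [e3]

lemma inv_pow_eq (d : ℕ) :
    (((1 + X) ^ d)⁻¹ : PowerSeries ℝ)
      = ((Uu ^ (-(d : ℤ)) : (PowerSeries ℝ)ˣ) : PowerSeries ℝ) := by
  have hpow : ((1 + X) ^ d : PowerSeries ℝ)
      = ((Uu ^ ((d : ℕ) : ℤ) : (PowerSeries ℝ)ˣ) : PowerSeries ℝ) := by
    rw [zpow_natCast, Units.val_pow_eq_pow_val, Uu_val]
  rw [PowerSeries.inv_eq_iff_mul_eq_one]
  · rw [hpow, mul_comm, Uval_mul]
    norm_num
  · rw [hpow, constU]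
    norm_num

lemma key (d r k : ℕ) (hk : k ≤ d) :
    PowerSeries.coeff (r - 1)
        (PowerSeries.derivativeFun
            ((((Polynomial.reflect d ((Polynomial.X : Polynomial ℝ) ^ k)).comp
                (Polynomial.X + 1) : Polynomial ℝ) : PowerSeries ℝ) *
              (((1 + PowerSeries.X) ^ d)⁻¹ : PowerSeries ℝ)) *
          (1 + PowerSeries.X) ^ (2 * r)) =
      -((k : ℝ) * genChoose (2 * (r : ℤ) - k - 1) (r - 1)) := by
  have h1 : (Polynomial.reflect d ((Polynomial.X : Polynomial ℝ) ^ k)).comp (Polynomial.X + 1)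
      = (Polynomial.X + 1) ^ (d - k) := by
    rw [Polynomial.reflect_monomial, Polynomial.revAt_le hk, Polynomial.pow_comp,
      Polynomial.X_comp]
  have h2 : (((Polynomial.X + 1 : Polynomial ℝ) ^ (d - k) : Polynomial ℝ) : PowerSeries ℝ)
      = ((Uu ^ ((d : ℤ) - k) : (PowerSeries ℝ)ˣ) : PowerSeries ℝ) := by
    have : ((d : ℤ) - k) = ((d - k : ℕ) : ℤ) := by
      rw [Nat.cast_sub hk]
    rw [this, zpow_natCast, Units.val_pow_eq_pow_val, Uu_val]
    push_cast
    rw [add_comm]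
  rw [h1, h2, inv_pow_eq, Uval_mul]
  have e1 : (d : ℤ) - k + -(d : ℤ) = -(k : ℤ) := by ring
  rw [e1, deriv_U]
  have h3 : ((1 + X) ^ (2 * r) : PowerSeries ℝ)
      = ((Uu ^ ((2 * r : ℕ) : ℤ) : (PowerSeries ℝ)ˣ) : PowerSeries ℝ) := by
    rw [zpow_natCast, Units.val_pow_eq_pow_val, Uu_val]
  rw [h3, mul_assoc, Uval_mul, coeff_C_mul, coeff_U]
  have e2 : -(k : ℤ) - 1 + ((2 * r : ℕ) : ℤ) = 2 * (r : ℤ) - k - 1 := by push_cast; ring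
  rw [e2]
  push_cast
  ring

noncomputable def Phi (d r : ℕ) (p : Polynomial ℝ) : ℝ :=
  PowerSeries.coeff (r - 1)
    (PowerSeries.derivativeFun
        ((((Polynomial.reflect d p).comp (Polynomial.X + 1) : Polynomial ℝ) : PowerSeries ℝ) *
          (((1 + PowerSeries.X) ^ d)⁻¹ : PowerSeries ℝ)) *
      (1 + PowerSeries.X) ^ (2 * r))

lemma derivativeFun_zero : derivativeFun (0 : PowerSeries ℝ) = 0 := by
  ext n
  simp [coeff_derivativeFun]

lemma Phi_zero (d r : ℕ) : Phi d r 0 = 0 := by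
  unfold Phi
  rw [Polynomial.reflect_zero, Polynomial.zero_comp]
  push_cast
  rw [zero_mul, derivativeFun_zero, zero_mul, map_zero]

lemma Phi_add (d r : ℕ) (p q : Polynomial ℝ) : Phi d r (p + q) = Phi d r p + Phi d r q := by
  unfold Phi
  rw [Polynomial.reflect_add, Polynomial.add_comp, Polynomial.coe_add, add_mul,
    derivativeFun_add, add_mul, map_add]

lemma Phi_C_mul (d r : ℕ) (a : ℝ) (p : Polynomial ℝ) :
    Phi d r (Polynomial.C a * p) = a * Phi d r p := by
  unfold Phi
  rw [Polynomial.reflect_C_mul, Polynomial.mul_comp, Polynomial.C_comp, Polynomial.coe_mul,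
    Polynomial.coe_C, mul_assoc, ← PowerSeries.smul_eq_C_mul, derivativeFun_smul,
    PowerSeries.smul_eq_C_mul, mul_assoc, coeff_C_mul]

lemma Phi_sum (d r : ℕ) (s : Finset ℕ) (f : ℕ → Polynomial ℝ) :
    Phi d r (∑ k ∈ s, f k) = ∑ k ∈ s, Phi d r (f k) := by
  classical
  induction s using Finset.induction_on with
  | empty => simp [Phi_zero]
  | insert _ _ h ih => rw [Finset.sum_insert h, Finset.sum_insert h, Phi_add, ih]

/-- For `A(t) = ∑ aₖ tᵏ`, `R(t) = t^d A(1/t)`, `B(t) = R(t+1)`, and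
`r·γᵣ(B) = [u^{r-1}] J'(u)(1+u)^{2r}` with `J(u) = B(u)/(1+u)^d`, one has
`r·γᵣ(B) = -∑_{k=0}^d k · binom(2r-k-1, r-1) · aₖ`. -/
theorem gamma_of_shifted_reciprocal
    (d r : ℕ) (hr : 1 ≤ r) (hrd : 2 * r ≤ d)
    (A : Polynomial ℝ) (hA : A.natDegree ≤ d) :
    PowerSeries.coeff (r - 1)
        (PowerSeries.derivativeFun
            ((((Polynomial.reflect d A).comp (Polynomial.X + 1) : Polynomial ℝ) : PowerSeries ℝ) *
              (((1 + PowerSeries.X) ^ d)⁻¹ : PowerSeries ℝ)) *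
          (1 + PowerSeries.X) ^ (2 * r)) =
      -∑ k ∈ Finset.range (d + 1),
        (k : ℝ) * genChoose (2 * (r : ℤ) - k - 1) (r - 1) * A.coeff k := by
  have hA' : A = ∑ k ∈ Finset.range (d + 1), Polynomial.C (A.coeff k) * Polynomial.X ^ k := by
    conv_lhs => rw [Polynomial.as_sum_range' A (d + 1) (Nat.lt_succ_of_le hA)]
    exact Finset.sum_congr rfl fun k _ => (Polynomial.C_mul_X_pow_eq_monomial).symm
  have hPhi : Phi d r A = -∑ k ∈ Finset.range (d + 1),
      (k : ℝ) * genChoose (2 * (r : ℤ) - k - 1) (r - 1) * A.coeff k := by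
    conv_lhs => rw [hA']
    rw [Phi_sum, ← Finset.sum_neg_distrib]
    refine Finset.sum_congr rfl fun k hk => ?_
    have hkd : k ≤ d := Nat.lt_succ_iff.mp (Finset.mem_range.mp hk)
    rw [Phi_C_mul]
    have : Phi d r ((Polynomial.X : Polynomial ℝ) ^ k)
        = -((k : ℝ) * genChoose (2 * (r : ℤ) - k - 1) (r - 1)) := key d r k hkd
    rw [this]
    ring
  exact hPhi
end

section
/- Let A(t) = a_0 + ... + a_d t^d with all a_k >= 0, R(t) = t^d A(1/t), B(t) = R(t+1), and define gamma_r(B) by r*gamma_r = [u^{r-1}] J'(u)(1+u)^{2r} with J(u) = B(u)/(1+u)^d. If r is odd, then gamma_r(B) <= 0. -/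
open PowerSeries Finset

noncomputable section GammaAux

private def Sser : ℝ⟦X⟧ := (1 + PowerSeries.X)⁻¹

private lemma constOneAdd : PowerSeries.constantCoeff (R := ℝ) (1 + PowerSeries.X) ≠ 0 := by simp

private lemma mulS : (1 + PowerSeries.X) * Sser = 1 :=
  PowerSeries.mul_inv_cancel _ constOneAdd

private lemma T_eq : ((1 - PowerSeries.X : ℝ⟦X⟧))⁻¹ = PowerSeries.mk (fun _ => (1:ℝ)) := by
  rw [PowerSeries.inv_eq_iff_mul_eq_one (by simp)]
  ext n
  cases n with
  | zero => simp [mul_sub]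
  | succ n => simp [mul_sub, PowerSeries.coeff_succ_mul_X, PowerSeries.coeff_mk,
      PowerSeries.coeff_one]

private lemma coeff_mul_nonneg {f g : ℝ⟦X⟧} (hf : ∀ n, 0 ≤ PowerSeries.coeff n f)
    (hg : ∀ n, 0 ≤ PowerSeries.coeff n g) (n : ℕ) : 0 ≤ PowerSeries.coeff n (f * g) := by
  rw [PowerSeries.coeff_mul]
  exact Finset.sum_nonneg fun p _ => mul_nonneg (hf _) (hg _)

private lemma coeff_pow_nonneg {f : ℝ⟦X⟧} (hf : ∀ n, 0 ≤ PowerSeries.coeff n f) (m : ℕ) :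
    ∀ n, 0 ≤ PowerSeries.coeff n (f ^ m) := by
  induction m with
  | zero =>
    intro n
    rw [pow_zero, PowerSeries.coeff_one]
    positivity
  | succ m ih => intro n; rw [pow_succ]; exact coeff_mul_nonneg ih hf n

private lemma coeff_oneAdd_nonneg : ∀ n, 0 ≤ PowerSeries.coeff n (1 + PowerSeries.X : ℝ⟦X⟧) := by
  intro n
  rw [map_add]
  rcases n with _ | n <;> simp [PowerSeries.coeff_one, PowerSeries.coeff_X]
  positivity

private lemma rescale_T : PowerSeries.rescale (-1 : ℝ) ((1 - PowerSeries.X)⁻¹ : ℝ⟦X⟧) = Sser := by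
  rw [Sser, PowerSeries.eq_inv_iff_mul_eq_one constOneAdd]
  have h1 : PowerSeries.rescale (-1:ℝ) (1 - PowerSeries.X) = 1 + PowerSeries.X := by
    rw [map_sub, map_one, PowerSeries.rescale_neg_one_X, sub_neg_eq_add]
  rw [← h1, ← map_mul, PowerSeries.inv_mul_cancel _ (by simp), map_one]

private lemma coeff_Spow_nonneg {n : ℕ} (hn : Even n) (m : ℕ) :
    0 ≤ PowerSeries.coeff n (Sser ^ m) := by
  have h : Sser ^ m = PowerSeries.rescale (-1:ℝ) (((1 - PowerSeries.X)⁻¹ : ℝ⟦X⟧) ^ m) := by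
    rw [map_pow, rescale_T]
  rw [h, PowerSeries.coeff_rescale, hn.neg_one_pow, one_mul]
  exact coeff_pow_nonneg (by intro k; rw [T_eq]; simp) m n

private lemma deriv_S : PowerSeries.derivativeFun Sser = -(Sser ^ 2) := by
  have h := congrArg PowerSeries.derivativeFun mulS
  rw [PowerSeries.derivativeFun_mul, PowerSeries.derivativeFun_one] at h
  have hd : PowerSeries.derivativeFun (1 + PowerSeries.X : ℝ⟦X⟧) = 1 := by
    ext n
    show PowerSeries.coeff n (PowerSeries.derivative ℝ (1 + PowerSeries.X)) = _
    rw [PowerSeries.coeff_derivative]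
    rcases n with _ | n <;>
      simp [PowerSeries.coeff_one, PowerSeries.coeff_X]
  rw [hd, smul_eq_mul, smul_eq_mul, mul_one] at h
  have h2 : (1 + PowerSeries.X) * PowerSeries.derivativeFun Sser = -Sser := by
    linear_combination h
  have h3 := congrArg (fun z => Sser * z) h2
  simp only [← mul_assoc, mul_comm Sser (1 + PowerSeries.X), mulS, one_mul] at h3
  rw [h3]
  ring

private lemma deriv_Spow (k : ℕ) :
    PowerSeries.derivativeFun (Sser ^ k) = -((k : ℝ⟦X⟧) * Sser ^ (k + 1)) := by
  induction k with
  | zero => simp [PowerSeries.derivativeFun_one]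
  | succ k ih =>
    rw [pow_succ, PowerSeries.derivativeFun_mul, ih, deriv_S, smul_eq_mul, smul_eq_mul]
    push_cast
    ring

private lemma derivativeFun_zero_s8 : PowerSeries.derivativeFun (0 : ℝ⟦X⟧) = 0 := by
  ext n
  show PowerSeries.coeff n (PowerSeries.derivative ℝ 0) = _
  simp [PowerSeries.coeff_derivativeFun]

private lemma derivativeFun_sum (s : Finset ℕ) (f : ℕ → ℝ⟦X⟧) :
    PowerSeries.derivativeFun (∑ k ∈ s, f k) = ∑ k ∈ s, PowerSeries.derivativeFun (f k) := by
  induction s using Finset.cons_induction with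
  | empty => simp [derivativeFun_zero_s8]
  | cons k s hk ih =>
    rw [Finset.sum_cons, Finset.sum_cons, PowerSeries.derivativeFun_add, ih]

private lemma derivativeFun_C_mul (a : ℝ) (f : ℝ⟦X⟧) :
    PowerSeries.derivativeFun (PowerSeries.C a * f) =
      PowerSeries.C a * PowerSeries.derivativeFun f := by
  rw [← PowerSeries.smul_eq_C_mul, ← PowerSeries.smul_eq_C_mul,
    PowerSeries.derivativeFun_smul]

private lemma reflect_sum (d : ℕ) (s : Finset ℕ) (f : ℕ → Polynomial ℝ) :
    Polynomial.reflect d (∑ k ∈ s, f k) = ∑ k ∈ s, Polynomial.reflect d (f k) := by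
  induction s using Finset.cons_induction with
  | empty => simp
  | cons k s hk ih =>
    rw [Finset.sum_cons, Finset.sum_cons, Polynomial.reflect_add, ih]

end GammaAux

/-- Let `A(t) = ∑ aₖ tᵏ` with nonnegative coefficients, `R(t) = t^d A(1/t)`, `B(t) = R(t+1)`,
and define `γᵣ(B)` by `r·γᵣ = [u^{r-1}] J'(u)(1+u)^{2r}` with `J(u) = B(u)/(1+u)^d`.
If `r` is odd then `γᵣ(B) ≤ 0`. -/
theorem gamma_odd_nonpos_of_shifted_reciprocal
    (d r : ℕ) (hr : 1 ≤ r) (hrd : 2 * r ≤ d) (hodd : Odd r)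
    (A : Polynomial ℝ) (hA : A.natDegree ≤ d) (hpos : ∀ k, 0 ≤ A.coeff k)
    (γ : ℝ)
    (hγ : (r : ℝ) * γ =
      PowerSeries.coeff (R := ℝ) (r - 1)
        (PowerSeries.derivativeFun
            ((((Polynomial.reflect d A).comp (Polynomial.X + 1) : Polynomial ℝ) : PowerSeries ℝ) *
              (((1 + PowerSeries.X) ^ d)⁻¹ : PowerSeries ℝ)) *
          (1 + PowerSeries.X) ^ (2 * r))) :
    γ ≤ 0 := by
  have heven : Even (r - 1) := Nat.Odd.sub_odd hodd odd_one
  -- the reflected polynomial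
  have hrefl : Polynomial.reflect d A =
      ∑ k ∈ Finset.range (d + 1), Polynomial.C (A.coeff k) * Polynomial.X ^ (d - k) := by
    conv_lhs => rw [A.as_sum_range' (d + 1) (Nat.lt_succ_of_le hA)]
    rw [reflect_sum]
    refine Finset.sum_congr rfl fun k hk => ?_
    rw [← Polynomial.C_mul_X_pow_eq_monomial, Polynomial.reflect_C_mul_X_pow,
      Polynomial.revAt_le (Nat.lt_succ_iff.mp (Finset.mem_range.mp hk))]
  -- B as a power series
  have hB : (((Polynomial.reflect d A).comp (Polynomial.X + 1) : Polynomial ℝ) : ℝ⟦X⟧) =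
      ∑ k ∈ Finset.range (d + 1),
        PowerSeries.C (A.coeff k) * (1 + PowerSeries.X) ^ (d - k) := by
    rw [hrefl, Polynomial.sum_comp, ← Polynomial.coeToPowerSeries.ringHom_apply, map_sum]
    refine Finset.sum_congr rfl fun k hk => ?_
    simp only [Polynomial.mul_comp, Polynomial.C_comp, Polynomial.pow_comp, Polynomial.X_comp,
      Polynomial.coeToPowerSeries.ringHom_apply, Polynomial.coe_mul, Polynomial.coe_pow,
      Polynomial.coe_C, Polynomial.coe_add, Polynomial.coe_X, Polynomial.coe_one]
    rw [add_comm]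
  -- inverse of (1+X)^d
  have hinv : (((1 + PowerSeries.X) ^ d)⁻¹ : ℝ⟦X⟧) = Sser ^ d := by
    rw [PowerSeries.inv_eq_iff_mul_eq_one (by simp), ← mul_pow, mul_comm Sser, mulS, one_pow]
  -- J as a sum
  have hJ : (((Polynomial.reflect d A).comp (Polynomial.X + 1) : Polynomial ℝ) : ℝ⟦X⟧) *
      (((1 + PowerSeries.X) ^ d)⁻¹ : ℝ⟦X⟧) =
      ∑ k ∈ Finset.range (d + 1), PowerSeries.C (A.coeff k) * Sser ^ k := by
    rw [hB, hinv, Finset.sum_mul]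
    refine Finset.sum_congr rfl fun k hk => ?_
    have hkd : k ≤ d := Nat.lt_succ_iff.mp (Finset.mem_range.mp hk)
    rw [mul_assoc]
    congr 1
    have hsd : Sser ^ d = Sser ^ (d - k) * Sser ^ k := by
      rw [← pow_add, Nat.sub_add_cancel hkd]
    rw [hsd, ← mul_assoc, ← mul_pow, mulS, one_pow, one_mul]
  -- each coefficient c k is nonnegative
  have hc : ∀ k, 0 ≤ PowerSeries.coeff (r - 1)
      (Sser ^ (k + 1) * (1 + PowerSeries.X) ^ (2 * r)) := by
    intro k
    rcases le_or_gt (k + 1) (2 * r) with h | h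
    · have heq : Sser ^ (k + 1) * (1 + PowerSeries.X) ^ (2 * r) =
          (1 + PowerSeries.X) ^ (2 * r - (k + 1)) := by
        have hp : (1 + PowerSeries.X : ℝ⟦X⟧) ^ (2 * r) =
            (1 + PowerSeries.X) ^ (k + 1) * (1 + PowerSeries.X) ^ (2 * r - (k + 1)) := by
          rw [← pow_add, Nat.add_sub_cancel' h]
        rw [hp, ← mul_assoc, mul_comm (Sser ^ (k + 1)), ← mul_pow, mulS, one_pow, one_mul]
      rw [heq]
      exact coeff_pow_nonneg coeff_oneAdd_nonneg _ _
    · have heq : Sser ^ (k + 1) * (1 + PowerSeries.X) ^ (2 * r) =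
          Sser ^ (k + 1 - 2 * r) := by
        have hp : Sser ^ (k + 1) = Sser ^ (k + 1 - 2 * r) * Sser ^ (2 * r) := by
          rw [← pow_add, Nat.sub_add_cancel h.le]
        rw [hp, mul_assoc, ← mul_pow, mul_comm Sser, mulS, one_pow, mul_one]
      rw [heq]
      exact coeff_Spow_nonneg heven _
  -- compute r * γ
  have hrγ : (r : ℝ) * γ ≤ 0 := by
    rw [hγ, hJ, derivativeFun_sum, Finset.sum_mul, map_sum]
    refine Finset.sum_nonpos fun k hk => ?_
    rw [derivativeFun_C_mul, deriv_Spow]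
    have hre : PowerSeries.C (A.coeff k) * -((k : ℝ⟦X⟧) * Sser ^ (k + 1)) *
        (1 + PowerSeries.X) ^ (2 * r) =
        PowerSeries.C (-(A.coeff k * k)) *
          (Sser ^ (k + 1) * (1 + PowerSeries.X) ^ (2 * r)) := by
      rw [← map_natCast (PowerSeries.C (R := ℝ)) k, map_neg, map_mul]
      ring
    rw [hre, PowerSeries.coeff_C_mul]
    have := hc k
    have hk0 : (0:ℝ) ≤ A.coeff k * k := mul_nonneg (hpos k) (Nat.cast_nonneg k)
    nlinarith
  have hr0 : (0:ℝ) < r := by exact_mod_cast hr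
  nlinarith
end

section
/- Let B(u) = b_0 + ... + b_d u^d with sgn(b_k) = (-1)^k for all k (i.e. (-1)^k b_k >= 0), and define gamma_r by r*gamma_r = [u^{r-1}] ((1+u)B'(u) - dB(u))/(1+u)^{d-2r+1} for 1 <= r <= d/2. Then (-1)^r gamma_r >= 0. -/
open PowerSeries Finset

lemma inv_one_add_pow_coeff (e j : ℕ) :
    PowerSeries.coeff (R := ℝ) j (((1 + PowerSeries.X : ℝ⟦X⟧) ^ (e + 1))⁻¹) =
      (-1) ^ j * Nat.choose (e + j) e := by
  have hA : ((1 + PowerSeries.X : ℝ⟦X⟧) ^ (e + 1))⁻¹ =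
      PowerSeries.rescale (-1) (PowerSeries.invOneSubPow ℝ (e + 1)).val := by
    have hc : PowerSeries.constantCoeff (R := ℝ) ((1 + PowerSeries.X : ℝ⟦X⟧) ^ (e + 1)) ≠ 0 := by
      simp
    rw [PowerSeries.inv_eq_iff_mul_eq_one hc]
    have h1X : (1 + PowerSeries.X : ℝ⟦X⟧) = PowerSeries.rescale (-1) (1 - PowerSeries.X) := by
      rw [map_sub, map_one, PowerSeries.rescale_neg_one_X, sub_neg_eq_add]
    rw [h1X, ← map_pow, ← map_mul]
    rw [← PowerSeries.invOneSubPow_inv_eq_one_sub_pow ℝ (e + 1),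
      (PowerSeries.invOneSubPow ℝ (e + 1)).val_inv, map_one]
  rw [hA, PowerSeries.coeff_rescale, PowerSeries.invOneSubPow_val_succ_eq_mk_add_choose,
    PowerSeries.coeff_mk]

/-- If `B(u) = ∑ bₖ uᵏ` with `sgn(bₖ) = (-1)^k` (i.e. `(-1)^k bₖ ≥ 0`), and `γᵣ` is defined by
`r·γᵣ = [u^{r-1}] ((1+u)B'(u) - dB(u))/(1+u)^{d-2r+1}` for `1 ≤ r ≤ d/2`, then
`(-1)^r γᵣ ≥ 0`. -/
theorem gamma_sign_of_alternating_coeffs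
    (d r : ℕ) (hr : 1 ≤ r) (hrd : 2 * r ≤ d) (b : ℕ → ℝ)
    (hsgn : ∀ k, 0 ≤ (-1) ^ k * b k)
    (γ : ℝ)
    (hγ : (r : ℝ) * γ =
      PowerSeries.coeff (R := ℝ) (r - 1)
        ((((1 + Polynomial.X) * Polynomial.derivative
              (∑ k ∈ Finset.range (d + 1), Polynomial.C (b k) * Polynomial.X ^ k) -
            (d : Polynomial ℝ) *
              (∑ k ∈ Finset.range (d + 1), Polynomial.C (b k) * Polynomial.X ^ k) :
            Polynomial ℝ) : PowerSeries ℝ) *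
          (((1 + PowerSeries.X) ^ (d - 2 * r + 1))⁻¹ : PowerSeries ℝ))) :
    0 ≤ (-1) ^ r * γ := by
  set B : Polynomial ℝ := ∑ k ∈ Finset.range (d + 1), Polynomial.C (b k) * Polynomial.X ^ k
    with hB
  set N : Polynomial ℝ :=
    (1 + Polynomial.X) * Polynomial.derivative B - (d : Polynomial ℝ) * B with hN
  have hBcoeff : ∀ i, i ≤ d → B.coeff i = b i := by
    intro i hi
    rw [hB, Polynomial.finset_sum_coeff]
    simp only [Polynomial.coeff_C_mul, Polynomial.coeff_X_pow, mul_ite, mul_one, mul_zero]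
    rw [Finset.sum_eq_single i]
    · simp
    · intro k _ hk; simp [Ne.symm hk]
    · intro h; exact absurd (Finset.mem_range.mpr (by omega)) h
  have hNcoeff : ∀ i, i < d →
      N.coeff i = (i + 1 : ℝ) * b (i + 1) + ((i : ℝ) - d) * b i := by
    intro i hi
    have hdC : ((d : ℕ) : Polynomial ℝ) = Polynomial.C ((d : ℕ) : ℝ) := by simp
    rw [hN, add_mul, one_mul, Polynomial.coeff_sub, Polynomial.coeff_add, hdC,
      Polynomial.coeff_C_mul]
    cases i with
    | zero =>
      rw [Polynomial.mul_coeff_zero, Polynomial.coeff_X_zero, zero_mul,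
        Polynomial.coeff_derivative, hBcoeff 1 (by omega), hBcoeff 0 (by omega)]
      push_cast
      ring
    | succ m =>
      rw [Polynomial.coeff_X_mul, Polynomial.coeff_derivative, Polynomial.coeff_derivative,
        hBcoeff (m + 1 + 1) (by omega), hBcoeff (m + 1) (by omega)]
      push_cast
      ring
  have key : 0 ≤ (-1 : ℝ) ^ r * ((r : ℝ) * γ) := by
    rw [hγ, PowerSeries.coeff_mul, Finset.mul_sum]
    apply Finset.sum_nonneg
    rintro ⟨i, j⟩ hij
    rw [Finset.HasAntidiagonal.mem_antidiagonal] at hij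
    simp only at hij ⊢
    have hid : i < d := by omega
    rw [Polynomial.coeff_coe, hNcoeff i hid, inv_one_add_pow_coeff]
    set A : ℝ := (i + 1 : ℝ) * b (i + 1) + ((i : ℝ) - d) * b i with hA
    set Cb : ℝ := (Nat.choose (d - 2 * r + j) (d - 2 * r) : ℝ) with hCb
    have hsign : (-1 : ℝ) ^ r * (-1 : ℝ) ^ j = (-1) ^ (i + 1) := by
      rw [← pow_add, show r + j = (i + 1) + 2 * j by omega, pow_add, pow_mul,
        neg_one_sq, one_pow, mul_one]
    have hrw : (-1 : ℝ) ^ r * (A * ((-1) ^ j * Cb)) =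
        ((-1 : ℝ) ^ r * (-1 : ℝ) ^ j) * A * Cb := by ring
    rw [hrw, hsign]
    have hXA : 0 ≤ (-1 : ℝ) ^ (i + 1) * A := by
      have hexp : (-1 : ℝ) ^ (i + 1) * A =
          ((i : ℝ) + 1) * ((-1) ^ (i + 1) * b (i + 1)) +
            ((d : ℝ) - i) * ((-1) ^ i * b i) := by
        rw [hA, pow_succ]; ring
      have hdi : (i : ℝ) ≤ d := by exact_mod_cast hid.le
      rw [hexp]
      have := hsgn (i + 1)
      have := hsgn i
      have h1 : (0 : ℝ) ≤ (i : ℝ) + 1 := by positivity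
      nlinarith
    exact mul_nonneg hXA (by rw [hCb]; positivity)
  have hrpos : (0 : ℝ) < r := by exact_mod_cast hr
  nlinarith [key, hrpos]
end

section
/- Let b_0, ..., b_d be nonnegative reals that are nonincreasing for 1 <= k <= r-1 (b_k >= b_{k+1}), and suppose 1 <= r <= d/3 and r >= 2. Then (-1)^r * (r*gamma_r - (-1)^r d binom(d-r-1, r-1) b_0) <= 0, i.e. sgn(r*gamma_r - (-1)^r d binom(d-r-1, r-1) b_0) = (-1)^{r+1}, where gamma_r is defined by r*gamma_r = [u^{r-1}] ((1+u)B'(u) - dB(u))/(1+u)^{d-2r+1} for B(u) = sum b_k u^k. -/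
open PowerSeries Finset

private lemma invOnePlusPow_mul_aux (n : ℕ) :
    ((1 + PowerSeries.X) ^ n : PowerSeries ℝ) *
      PowerSeries.mk (fun j => (-1) ^ j * ((n + j - 1).choose j : ℝ)) = 1 := by
  induction n with
  | zero =>
      have h : PowerSeries.mk (fun j => ((-1) ^ j * ((0 + j - 1).choose j : ℝ))) =
          (1 : PowerSeries ℝ) := by
        ext j
        cases j with
        | zero => simp
        | succ i =>
            have : (0 + (i + 1) - 1).choose (i + 1) = 0 :=
              Nat.choose_eq_zero_of_lt (by omega)
            simp [this]
      rw [h, pow_zero, one_mul]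
  | succ n ih =>
      have key : ((1 + PowerSeries.X : PowerSeries ℝ)) *
          PowerSeries.mk (fun j => (-1) ^ j * (((n + 1) + j - 1).choose j : ℝ)) =
          PowerSeries.mk (fun j => (-1) ^ j * ((n + j - 1).choose j : ℝ)) := by
        ext j
        rw [add_mul, one_mul, map_add]
        cases j with
        | zero => simp
        | succ i =>
            rw [PowerSeries.coeff_mk, PowerSeries.coeff_succ_X_mul, PowerSeries.coeff_mk,
              PowerSeries.coeff_mk]
            rw [show (n + 1) + (i + 1) - 1 = (n + i) + 1 from by omega,
              show (n + 1) + i - 1 = n + i from by omega,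
              show n + (i + 1) - 1 = n + i from by omega]
            rw [Nat.choose_succ_succ (n + i) i]
            push_cast
            ring
      rw [pow_succ, mul_assoc, key, ih]

private lemma invOnePlusPow_eq (n : ℕ) :
    (((1 + PowerSeries.X) ^ n)⁻¹ : PowerSeries ℝ) =
      PowerSeries.mk (fun j => (-1) ^ j * ((n + j - 1).choose j : ℝ)) := by
  rw [PowerSeries.inv_eq_iff_mul_eq_one]
  · rw [mul_comm]; exact invOnePlusPow_mul_aux n
  · simp

private lemma altSum (N : ℕ) (f : ℕ → ℝ) (h0 : ∀ i < N, 0 ≤ f i)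
    (hmono : ∀ i, i + 1 < N → f (i + 1) ≤ f i) :
    0 ≤ ∑ i ∈ Finset.range N, (-1 : ℝ) ^ i * f i ∧
      (1 ≤ N → ∑ i ∈ Finset.range N, (-1 : ℝ) ^ i * f i ≤ f 0) := by
  induction N generalizing f with
  | zero => simp
  | succ N ih =>
      have e : ∑ i ∈ Finset.range (N + 1), (-1 : ℝ) ^ i * f i
          = f 0 - ∑ i ∈ Finset.range N, (-1 : ℝ) ^ i * f (i + 1) := by
        rw [Finset.sum_range_succ', pow_zero, one_mul]
        have h : ∀ i ∈ Finset.range N, (-1 : ℝ) ^ (i + 1) * f (i + 1)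
            = -((-1) ^ i * f (i + 1)) := fun i _ => by ring
        rw [Finset.sum_congr rfl h, Finset.sum_neg_distrib]
        ring
      obtain ⟨hT0, hT1⟩ := ih (fun i => f (i + 1)) (fun i hi => h0 (i + 1) (by omega))
        (fun i hi => hmono (i + 1) (by omega))
      rw [e]
      have hf0 : 0 ≤ f 0 := h0 0 (by omega)
      rcases Nat.eq_zero_or_pos N with h | h
      · subst h; simp [hf0]
      · have h10 : f 1 ≤ f 0 := hmono 0 (by omega)
        constructor
        · linarith [hT1 h]
        · intro _; linarith

private lemma natStep (m t u : ℕ) (hm : 1 ≤ m) (hu : m + t + 2 ≤ u) :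
    (m + 1) * Nat.choose (t + 1 + u) (t + 1) + (m + 2 * t + 3 + u) * Nat.choose (t + u) t
      ≤ m * Nat.choose (t + 2 + u) (t + 2)
        + (m + 2 * t + 4 + u) * Nat.choose (t + 1 + u) (t + 1) := by
  have h2 : (m + 2 * t + 3 + u) * Nat.choose (t + u) t
      ≤ (m + 2 * t + 4 + u) * Nat.choose (t + 1 + u) (t + 1) := by
    apply Nat.mul_le_mul (by omega)
    rw [show t + 1 + u = (t + u) + 1 from by omega, Nat.choose_succ_succ]
    exact Nat.le_add_right _ _
  have h1 : (m + 1) * Nat.choose (t + 1 + u) (t + 1) ≤ m * Nat.choose (t + 2 + u) (t + 2) := by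
    have key : (t + 2 + u) * Nat.choose (t + 1 + u) (t + 1)
        = Nat.choose (t + 2 + u) (t + 2) * (t + 2) := by
      have h := Nat.add_one_mul_choose_eq (t + 1 + u) (t + 1)
      simpa [show (t + 1 + u) + 1 = t + 2 + u from by omega] using h
    refine Nat.le_of_mul_le_mul_left (c := t + 2) ?_ (by omega)
    calc (t + 2) * ((m + 1) * Nat.choose (t + 1 + u) (t + 1))
        = ((m + 1) * (t + 2)) * Nat.choose (t + 1 + u) (t + 1) := by ring
      _ ≤ (m * (t + 2 + u)) * Nat.choose (t + 1 + u) (t + 1) := by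
          apply Nat.mul_le_mul_right
          nlinarith
      _ = m * ((t + 2 + u) * Nat.choose (t + 1 + u) (t + 1)) := by ring
      _ = (t + 2) * (m * Nat.choose (t + 2 + u) (t + 2)) := by rw [key]; ring
  omega

private def aCoef (d r : ℕ) : ℕ → ℕ := fun i =>
  if i = r - 1 then r
  else (i + 1) * Nat.choose (d - r - 1 - i) (r - 1 - i)
    + (d - 1 - i) * Nat.choose (d - r - 2 - i) (r - 2 - i)

private lemma aCoef_eq (d r i : ℕ) (hi : i < r - 1) :
    aCoef d r i = (i + 1) * Nat.choose (d - r - 1 - i) (r - 1 - i)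
      + (d - 1 - i) * Nat.choose (d - r - 2 - i) (r - 2 - i) := if_neg (by omega)

private lemma aCoef_last (d r : ℕ) : aCoef d r (r - 1) = r := if_pos rfl

private lemma aCoef_anti (d r : ℕ) (hr2 : 2 ≤ r) (hrd : 3 * r ≤ d) (i : ℕ)
    (hi : i + 1 < r) : aCoef d r (i + 1) ≤ aCoef d r i := by
  by_cases hc : i + 1 = r - 1
  · rw [show i + 1 = r - 1 from hc, aCoef_last, aCoef_eq d r i (by omega),
      show r - 1 - i = 1 from by omega, show r - 2 - i = 0 from by omega,
      Nat.choose_one_right, Nat.choose_zero_right, mul_one]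
    calc r ≤ d - 1 - i := by omega
      _ ≤ (i + 1) * (d - r - 1 - i) + (d - 1 - i) := Nat.le_add_left _ _
  · rw [aCoef_eq d r (i + 1) (by omega), aCoef_eq d r i (by omega)]
    have h := natStep (i + 1) (r - i - 3) (d - 2 * r) (by omega) (by omega)
    rw [show d - r - 1 - (i + 1) = r - i - 3 + 1 + (d - 2 * r) from by omega,
      show r - 1 - (i + 1) = r - i - 3 + 1 from by omega,
      show d - 1 - (i + 1) = i + 1 + 2 * (r - i - 3) + 3 + (d - 2 * r) from by omega,
      show d - r - 2 - (i + 1) = r - i - 3 + (d - 2 * r) from by omega,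
      show r - 2 - (i + 1) = r - i - 3 from by omega,
      show d - r - 1 - i = r - i - 3 + 2 + (d - 2 * r) from by omega,
      show r - 1 - i = r - i - 3 + 2 from by omega,
      show d - 1 - i = i + 1 + 2 * (r - i - 3) + 4 + (d - 2 * r) from by omega,
      show d - r - 2 - i = r - i - 3 + 1 + (d - 2 * r) from by omega,
      show r - 2 - i = r - i - 3 + 1 from by omega]
    exact h

/-- If `b₀, …, b_d` are nonnegative and nonincreasing for `1 ≤ k ≤ r-1`, with `2 ≤ r ≤ d/3`,
then `(-1)^r (r·γᵣ - (-1)^r d binom(d-r-1, r-1) b₀) ≤ 0`, where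
`r·γᵣ = [u^{r-1}] ((1+u)B'(u) - dB(u))/(1+u)^{d-2r+1}` for `B(u) = ∑ bₖ uᵏ`. -/
theorem gamma_shifted_sign_of_decreasing_coeffs
    (d r : ℕ) (hr2 : 2 ≤ r) (hrd : 3 * r ≤ d) (b : ℕ → ℝ)
    (hnonneg : ∀ k ≤ d, 0 ≤ b k)
    (hdec : ∀ k, 1 ≤ k → k ≤ r - 1 → b (k + 1) ≤ b k) :
    (-1) ^ r *
        (PowerSeries.coeff (R := ℝ) (r - 1)
            ((((1 + Polynomial.X) * Polynomial.derivative
                  (∑ k ∈ Finset.range (d + 1), Polynomial.C (b k) * Polynomial.X ^ k) -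
                (d : Polynomial ℝ) *
                  (∑ k ∈ Finset.range (d + 1), Polynomial.C (b k) * Polynomial.X ^ k) :
                Polynomial ℝ) : PowerSeries ℝ) *
              (((1 + PowerSeries.X) ^ (d - 2 * r + 1))⁻¹ : PowerSeries ℝ)) -
          (-1) ^ r * (d : ℝ) * (Nat.choose (d - r - 1) (r - 1) : ℝ) * b 0) ≤ 0 := by
  obtain ⟨r', rfl⟩ : ∃ r', r = r' + 2 := ⟨r - 2, by omega⟩
  set B : Polynomial ℝ := ∑ k ∈ Finset.range (d + 1), Polynomial.C (b k) * Polynomial.X ^ k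
    with hBdef
  have hBc : ∀ j, j ≤ d → B.coeff j = b j := by
    intro j hj
    simp [hBdef, Polynomial.finset_sum_coeff, Polynomial.coeff_C_mul, Polynomial.coeff_X_pow,
      Finset.sum_ite_eq, Nat.lt_succ_iff, hj]
  have hPc : ∀ k, k < r' + 2 →
      ((1 + Polynomial.X) * Polynomial.derivative B - (d : Polynomial ℝ) * B).coeff k
        = ((k : ℝ) + 1) * b (k + 1) + ((k : ℝ) - (d : ℝ)) * b k := by
    intro k hk
    rw [Polynomial.coeff_sub, add_mul, one_mul, Polynomial.coeff_add,
      ← Polynomial.C_eq_natCast, Polynomial.coeff_C_mul, hBc k (by omega),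
      Polynomial.coeff_derivative, hBc (k + 1) (by omega)]
    cases k with
    | zero => simp [Polynomial.mul_coeff_zero]; ring
    | succ j =>
        rw [Polynomial.coeff_X_mul, Polynomial.coeff_derivative, hBc (j + 1) (by omega)]
        push_cast
        ring
  rw [show r' + 2 - 1 = r' + 1 from rfl, invOnePlusPow_eq, PowerSeries.coeff_mul,
    Finset.Nat.sum_antidiagonal_eq_sum_range_succ_mk, mul_sub, Finset.mul_sum]
  have step1 : ∑ k ∈ Finset.range (r' + 1).succ,
      (-1 : ℝ) ^ (r' + 2) *
        ((PowerSeries.coeff (R := ℝ) (k, r' + 1 - k).1)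
            (((1 + Polynomial.X) * Polynomial.derivative B - (d : Polynomial ℝ) * B :
              Polynomial ℝ) : PowerSeries ℝ) *
          (PowerSeries.coeff (R := ℝ) (k, r' + 1 - k).2)
            (PowerSeries.mk fun j => (-1) ^ j * ((d - 2 * (r' + 2) + 1 + j - 1).choose j : ℝ)))
      = ∑ k ∈ Finset.range (r' + 1).succ,
          ((-1 : ℝ) ^ (k + 1) * ((k + 1 : ℕ) : ℝ)
              * ((d - (r' + 2) - 1 - k).choose (r' + 1 - k) : ℝ) * b (k + 1)
            + (-1 : ℝ) ^ k * ((d - k : ℕ) : ℝ)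
              * ((d - (r' + 2) - 1 - k).choose (r' + 1 - k) : ℝ) * b k) := by
    refine Finset.sum_congr rfl fun k hk => ?_
    rw [Finset.mem_range] at hk
    have hk' : k ≤ r' + 1 := by omega
    rw [Polynomial.coeff_coe, hPc k (by omega), PowerSeries.coeff_mk,
      show d - 2 * (r' + 2) + 1 + (r' + 1 - k) - 1 = d - (r' + 2) - 1 - k from by omega,
      Nat.cast_sub (show k ≤ d by omega), Nat.cast_add, Nat.cast_one]
    have hs : (-1 : ℝ) ^ (r' + 2) * (-1 : ℝ) ^ (r' + 1 - k) = (-1 : ℝ) ^ (k + 1) := by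
      rw [← pow_add, show r' + 2 + (r' + 1 - k) = 2 * (r' + 1 - k) + (k + 1) from by omega,
        pow_add, pow_mul]
      norm_num
    linear_combination (((k : ℝ) + 1) * b (k + 1) + ((k : ℝ) - (d : ℝ)) * b k)
      * ((d - (r' + 2) - 1 - k).choose (r' + 1 - k) : ℝ) * hs
  rw [step1, Finset.sum_add_distrib]
  have hb0 : (-1 : ℝ) ^ (r' + 2) *
      ((-1 : ℝ) ^ (r' + 2) * (d : ℝ) * ((d - (r' + 2) - 1).choose (r' + 1) : ℝ) * b 0)
      = (d : ℝ) * ((d - (r' + 2) - 1).choose (r' + 1) : ℝ) * b 0 := by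
    have h11 : (-1 : ℝ) ^ (r' + 2) * (-1 : ℝ) ^ (r' + 2) = 1 := by
      rw [← pow_add]; exact Even.neg_one_pow ⟨r' + 2, by ring⟩
    calc (-1 : ℝ) ^ (r' + 2) *
          ((-1 : ℝ) ^ (r' + 2) * (d : ℝ) * ((d - (r' + 2) - 1).choose (r' + 1) : ℝ) * b 0)
        = ((-1 : ℝ) ^ (r' + 2) * (-1 : ℝ) ^ (r' + 2))
            * ((d : ℝ) * ((d - (r' + 2) - 1).choose (r' + 1) : ℝ) * b 0) := by ring
      _ = (d : ℝ) * ((d - (r' + 2) - 1).choose (r' + 1) : ℝ) * b 0 := by rw [h11, one_mul]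
  rw [hb0]
  have hsnd : (∑ k ∈ Finset.range (r' + 1).succ, (-1 : ℝ) ^ k * ((d - k : ℕ) : ℝ)
        * ((d - (r' + 2) - 1 - k).choose (r' + 1 - k) : ℝ) * b k)
      = (∑ i ∈ Finset.range (r' + 1), (-1 : ℝ) ^ (i + 1) * ((d - (i + 1) : ℕ) : ℝ)
          * ((d - (r' + 2) - 1 - (i + 1)).choose (r' + 1 - (i + 1)) : ℝ) * b (i + 1))
        + (d : ℝ) * ((d - (r' + 2) - 1).choose (r' + 1) : ℝ) * b 0 := by
    rw [Finset.sum_range_succ']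
    congr 1
    norm_num
  rw [hsnd, Finset.sum_range_succ]
  -- now everything is peeled; set f i := aCoef * b (i+1)
  have key : (∑ i ∈ Finset.range (r' + 1), (-1 : ℝ) ^ (i + 1) * ((i + 1 : ℕ) : ℝ)
        * ((d - (r' + 2) - 1 - i).choose (r' + 1 - i) : ℝ) * b (i + 1))
      + (∑ i ∈ Finset.range (r' + 1), (-1 : ℝ) ^ (i + 1) * ((d - (i + 1) : ℕ) : ℝ)
          * ((d - (r' + 2) - 1 - (i + 1)).choose (r' + 1 - (i + 1)) : ℝ) * b (i + 1))
      + ((-1 : ℝ) ^ (r' + 1 + 1) * ((r' + 1 + 1 : ℕ) : ℝ)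
          * ((d - (r' + 2) - 1 - (r' + 1)).choose (r' + 1 - (r' + 1)) : ℝ) * b (r' + 1 + 1))
      = -((∑ i ∈ Finset.range (r' + 1), (-1 : ℝ) ^ i * ((aCoef d (r' + 2) i : ℝ) * b (i + 1)))
          + (-1 : ℝ) ^ (r' + 1) * ((aCoef d (r' + 2) (r' + 1) : ℝ) * b (r' + 1 + 1))) := by
    rw [← Finset.sum_add_distrib]
    have h1 : ∀ i ∈ Finset.range (r' + 1),
        (-1 : ℝ) ^ (i + 1) * ((i + 1 : ℕ) : ℝ)
            * ((d - (r' + 2) - 1 - i).choose (r' + 1 - i) : ℝ) * b (i + 1)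
          + (-1 : ℝ) ^ (i + 1) * ((d - (i + 1) : ℕ) : ℝ)
            * ((d - (r' + 2) - 1 - (i + 1)).choose (r' + 1 - (i + 1)) : ℝ) * b (i + 1)
        = -((-1 : ℝ) ^ i * ((aCoef d (r' + 2) i : ℝ) * b (i + 1))) := by
      intro i hi
      rw [Finset.mem_range] at hi
      rw [show (aCoef d (r' + 2) i : ℕ)
          = (i + 1) * Nat.choose (d - (r' + 2) - 1 - i) (r' + 1 - i)
            + (d - (i + 1)) * Nat.choose (d - (r' + 2) - 1 - (i + 1)) (r' + 1 - (i + 1))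
          from by
            rw [aCoef_eq d (r' + 2) i (by omega),
              show r' + 2 - 1 - i = r' + 1 - i from by omega,
              show r' + 2 - 2 - i = r' + 1 - (i + 1) from by omega,
              show d - (r' + 2) - 2 - i = d - (r' + 2) - 1 - (i + 1) from by omega,
              show d - 1 - i = d - (i + 1) from by omega]]
      push_cast
      ring
    rw [Finset.sum_congr rfl h1, Finset.sum_neg_distrib,
      show aCoef d (r' + 2) (r' + 1) = r' + 2 from aCoef_last d (r' + 2),
      show r' + 1 - (r' + 1) = 0 from by omega, Nat.choose_zero_right]
    push_cast
    ring
  have halt : 0 ≤ (∑ i ∈ Finset.range (r' + 1), (-1 : ℝ) ^ i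
        * ((aCoef d (r' + 2) i : ℝ) * b (i + 1)))
      + (-1 : ℝ) ^ (r' + 1) * ((aCoef d (r' + 2) (r' + 1) : ℝ) * b (r' + 1 + 1)) := by
    have h := (altSum (r' + 1 + 1) (fun i => (aCoef d (r' + 2) i : ℝ) * b (i + 1))
      (fun i hi => mul_nonneg (Nat.cast_nonneg _) (hnonneg (i + 1) (by omega)))
      (fun i hi => by
        refine mul_le_mul (Nat.cast_le.2 (aCoef_anti d (r' + 2) (by omega) hrd i (by omega)))
          (hdec (i + 1) (by omega) (by omega)) (hnonneg (i + 1 + 1) (by omega))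
          (Nat.cast_nonneg _))).1
    rwa [Finset.sum_range_succ] at h
  linarith [key, halt]
end
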